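/- arXiv:0904.2271 — 2 statements merged into one kernel-verified Lean document; each statement's English description precedes it below -/
import Mathlib

section
/- Let m ≥ 2 be an integer and G : [2,∞) → (0,∞) a function with G(X) → ∞, and suppose: (i) for every large X in a sequence x_n → ∞ we have |Δ(x_n)| ≥ B₃·G(x_n); (ii) |Δ(X) − Δ(x)| ≤ B₁·(x−X)·log X + X^ε for X ≤ x ≤ X+H; (iii) Δ(x) ≪ x^{1/3}. Then with H = B₂·G(X)/log X for sufficiently small B₂ > 0, the function Δ does not change sign on [x_n, x_n + H] and (1/H)∫_{x_n}^{x_n+H} |Δ(x)| dx ≥ (B₃/2)·G(x_n) for large n. -/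
open MeasureTheory intervalIntegral Filter

/-- The key step in the proof of Theorem 1: along Soundararajan's omega-sequence `x n`,
with `H = B₂·G(x n)/log(x n)` for sufficiently small `B₂ > 0`, the error term `Δ` keeps
a fixed sign on `[x n, x n + H]` and `(1/H)∫ |Δ| ≥ (B₃/2)·G(x n)` for large `n`. -/
theorem omega_interval_step (m : ℕ) (hm : 2 ≤ m) (Δ G : ℝ → ℝ) (x : ℕ → ℝ)
    (hGpos : ∀ X : ℝ, 2 ≤ X → 0 < G X)
    (hx : Tendsto x atTop atTop)
    (ε B₁ B₃ : ℝ) (hε : 0 < ε) (hB₁ : 0 < B₁) (hB₃ : 0 < B₃)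
    -- (i) the omega-result along the sequence
    (hi : ∀ᶠ n in atTop, B₃ * G (x n) ≤ |Δ (x n)|)
    -- (ii) the local variation bound
    (hii : ∀ᶠ X in (atTop : Filter ℝ), ∀ y : ℝ, X ≤ y → y ≤ 2 * X →
      |Δ X - Δ y| ≤ B₁ * (y - X) * Real.log X + X ^ ε)
    -- (iii) the pointwise bound Δ(x) ≪ x^{1/3}
    (hiii : ∃ c : ℝ, 0 < c ∧ ∀ X : ℝ, 2 ≤ X → |Δ X| ≤ c * X ^ ((1 : ℝ) / 3))
    -- G grows faster than X^ε·log X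
    (hGε : Tendsto (fun X : ℝ => G X / (X ^ ε * Real.log X)) atTop atTop)
    (hint : ∀ a b : ℝ, IntervalIntegrable Δ volume a b) :
    ∃ B₂₀ : ℝ, 0 < B₂₀ ∧ ∀ B₂ : ℝ, 0 < B₂ → B₂ ≤ B₂₀ →
      ∀ᶠ n in atTop,
        (∀ y ∈ Set.Icc (x n) (x n + B₂ * G (x n) / Real.log (x n)),
          ∀ z ∈ Set.Icc (x n) (x n + B₂ * G (x n) / Real.log (x n)), 0 ≤ Δ y * Δ z) ∧
        (B₃ / 2) * G (x n) ≤
          (Real.log (x n) / (B₂ * G (x n))) *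
            ∫ t in (x n)..(x n + B₂ * G (x n) / Real.log (x n)), |Δ t| := by
  obtain ⟨c, hc, hΔc⟩ := hiii
  refine ⟨B₃ / (4 * B₁), by positivity, fun B₂ hB₂ hB₂le => ?_⟩
  set K : ℝ := B₂ * c / B₃ with hK
  have h4 : ∀ᶠ X in (atTop : Filter ℝ), X ^ ε * Real.log X ≤ (B₃ / 4) * G X := by
    filter_upwards [hGε.eventually_ge_atTop (4 / B₃), eventually_ge_atTop (3 : ℝ)] with X h hX
    have hlog : 0 < Real.log X := Real.log_pos (by linarith)
    have hP : 0 < X ^ ε * Real.log X := by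
      have : (0:ℝ) < X ^ ε := Real.rpow_pos_of_pos (by linarith) ε
      positivity
    have h' : 4 * (X ^ ε * Real.log X) ≤ G X * B₃ := by
      have := (div_le_div_iff₀ hB₃ hP).mp h
      linarith
    linarith
  have h5 : ∀ᶠ X in (atTop : Filter ℝ), K * X ^ ((1:ℝ)/3) ≤ X := by
    have ht : Tendsto (fun X : ℝ => X ^ ((2:ℝ)/3)) atTop atTop :=
      tendsto_rpow_atTop (by norm_num)
    filter_upwards [ht.eventually_ge_atTop K, eventually_ge_atTop (1 : ℝ)] with X h hX1
    have h13 : (0:ℝ) ≤ X ^ ((1:ℝ)/3) := Real.rpow_nonneg (by linarith) _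
    calc K * X ^ ((1:ℝ)/3) ≤ X ^ ((2:ℝ)/3) * X ^ ((1:ℝ)/3) :=
          mul_le_mul_of_nonneg_right h h13
      _ = X := by
          rw [← Real.rpow_add (by linarith : (0:ℝ) < X)]; norm_num
  filter_upwards [hi, hx.eventually hii, hx.eventually (eventually_ge_atTop (3:ℝ)),
      hx.eventually h4, hx.eventually h5] with n hΔn hvar hX3 hεG hKX
  set X : ℝ := x n with hXdef
  set L : ℝ := Real.log X with hLdef
  have hGx : 0 < G X := hGpos X (by linarith)
  have hL1 : 1 ≤ L := by
    rw [hLdef]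
    rw [Real.le_log_iff_exp_le (by linarith)]
    calc Real.exp 1 ≤ 2.7182818286 := Real.exp_one_lt_d9.le
      _ ≤ X := by linarith
  have hL0 : 0 < L := by linarith
  set H : ℝ := B₂ * G X / L with hHdef
  have hH0 : 0 < H := by positivity
  have hHL : H * L = B₂ * G X := div_mul_cancel₀ _ (ne_of_gt hL0)
  have hGc : B₃ * G X ≤ c * X ^ ((1:ℝ)/3) := le_trans hΔn (hΔc X (by linarith))
  have hHX : H ≤ X := by
    have h13 : (0:ℝ) ≤ X ^ ((1:ℝ)/3) := Real.rpow_nonneg (by linarith) _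
    have hG13 : G X ≤ c / B₃ * X ^ ((1:ℝ)/3) := by
      rw [div_mul_eq_mul_div, le_div_iff₀ hB₃]; linarith [hGc]
    have h1 : H ≤ B₂ * G X := by
      rw [hHdef]
      exact div_le_self (by positivity) hL1
    have h2 : B₂ * G X ≤ K * X ^ ((1:ℝ)/3) := by
      calc B₂ * G X ≤ B₂ * (c / B₃ * X ^ ((1:ℝ)/3)) := by
            exact mul_le_mul_of_nonneg_left hG13 hB₂.le
        _ = K * X ^ ((1:ℝ)/3) := by rw [hK]; ring
    linarith
  have key : ∀ y ∈ Set.Icc X (X + H), |Δ X - Δ y| ≤ (B₃ / 2) * G X := by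
    intro y hy
    obtain ⟨hy1, hy2⟩ := hy
    have h1 : |Δ X - Δ y| ≤ B₁ * (y - X) * L + X ^ ε := hvar y hy1 (by linarith)
    have h2 : B₁ * (y - X) * L ≤ B₁ * H * L := by
      have hyH : y - X ≤ H := by linarith
      have : B₁ * (y - X) ≤ B₁ * H := mul_le_mul_of_nonneg_left hyH hB₁.le
      exact mul_le_mul_of_nonneg_right this hL0.le
    have h3 : B₁ * H * L = B₁ * (B₂ * G X) := by rw [mul_assoc, hHL]
    have h4' : B₁ * (B₂ * G X) ≤ (B₃ / 4) * G X := by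
      have hBB : B₁ * B₂ ≤ B₃ / 4 := by
        calc B₁ * B₂ ≤ B₁ * (B₃ / (4 * B₁)) := mul_le_mul_of_nonneg_left hB₂le hB₁.le
          _ = B₃ / 4 := by field_simp
      nlinarith
    have h5' : X ^ ε ≤ (B₃ / 4) * G X := by
      have hP : (0:ℝ) ≤ X ^ ε := (Real.rpow_pos_of_pos (by linarith) ε).le
      have : X ^ ε ≤ X ^ ε * L := le_mul_of_one_le_right hP hL1
      linarith [hεG]
    linarith
  have low : ∀ y ∈ Set.Icc X (X + H), (B₃ / 2) * G X ≤ |Δ y| := by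
    intro y hy
    have hk := key y hy
    have habs : |Δ X| - |Δ y| ≤ |Δ X - Δ y| := abs_sub_abs_le_abs_sub _ _
    linarith [hΔn]
  have sgn : ∀ y ∈ Set.Icc X (X + H), ∀ z ∈ Set.Icc X (X + H), 0 ≤ Δ y * Δ z := by
    intro y hy z hz
    have ky := abs_le.mp ((key y hy).trans_eq rfl)
    have kz := abs_le.mp ((key z hz).trans_eq rfl)
    rcases le_or_gt 0 (Δ X) with h | h
    · have hBG : 0 < B₃ * G X := by positivity
      have hXa : B₃ * G X ≤ Δ X := by rwa [abs_of_nonneg h] at hΔn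
      have hy' : 0 ≤ Δ y := by linarith [ky.2]
      have hz' : 0 ≤ Δ z := by linarith [kz.2]
      exact mul_nonneg hy' hz'
    · have hBG : 0 < B₃ * G X := by positivity
      have hXa : B₃ * G X ≤ -Δ X := by rwa [abs_of_neg h] at hΔn
      have hy' : Δ y ≤ 0 := by linarith [ky.1]
      have hz' : Δ z ≤ 0 := by linarith [kz.1]
      exact mul_nonneg_of_nonpos_of_nonpos hy' hz'
  refine ⟨sgn, ?_⟩
  have hab : X ≤ X + H := by linarith
  have hint1 : IntervalIntegrable (fun t => |Δ t|) volume X (X + H) := (hint X (X + H)).abs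
  have hmono := intervalIntegral.integral_mono_on hab intervalIntegrable_const hint1
    (fun t ht => low t ht)
  rw [intervalIntegral.integral_const, smul_eq_mul] at hmono
  have hcoef : 0 < L / (B₂ * G X) := by positivity
  calc (B₃ / 2) * G X = (L / (B₂ * G X)) * ((X + H - X) * ((B₃ / 2) * G X)) := by
        rw [hHdef]; field_simp; ring
    _ ≤ (L / (B₂ * G X)) * ∫ t in X..(X + H), |Δ t| :=
        mul_le_mul_of_nonneg_left hmono hcoef.le
end

section
/- Let k ≥ 2 and K ≥ 1, and suppose that for all quadruples (m, n, j, ℓ) with K < m, n, j, ℓ ≤ 2K counted with the Robert–Sargos bound: the number of quadruples with |m^{1/k} + n^{1/k} − j^{1/k} − ℓ^{1/k}| < δ·K^{1/k} is ≪_ε K^ε(K^4·δ + K^2). Then, with δ = X^{1−1/k}·H^{−1}·K^{−1/k} and using d_k(n) ≪_ε n^ε, the sum Σ d_k(m)d_k(n)d_k(j)d_k(ℓ)·(mnjℓ)^{−(k+1)/(2k)} over quadruples in (K, 2K]^4 with |m^{1/k}+n^{1/k}−j^{1/k}−ℓ^{1/k}| ≤ X^{1−1/k+ε}·H^{−1}/(2kπ),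 multiplied by H, is ≪_ε X^ε·H + X^{1−1/k+ε}·K^{2−3/k}·X^ε. -/
open Real

/-- `dk k n` is the number of ordered factorizations of `n` into `k` positive factors. -/
def dk (k n : ℕ) : ℕ := Fintype.card {f : Fin k → Fin (n + 1) // (∏ i, ((f i : ℕ))) = n}

private lemma qsb_alg (c₁ g u v w H T P R rr r4δ E Q : ℝ)
    (hc₁ : 0 ≤ c₁) (hg : 0 ≤ g) (hu0 : 0 ≤ u) (hv0 : 0 ≤ v) (hw0 : 0 ≤ w)
    (hH0 : 0 ≤ H) (hT0 : 0 ≤ T) (hR0 : 0 ≤ R) (hrr0 : 0 ≤ rr)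
    (hE0 : 0 ≤ E) (hQ0 : 0 ≤ Q)
    (hQG : Q ≤ g * v) (huv : u ≤ v) (hEq : r4δ * R = 2 * T * w)
    (hrr : rr * R ≤ 1) (hHT : H * T ≤ P) (hv5 : v * (v * (v * (v * v))) ≤ E) :
    H * ((c₁ * u * (r4δ + rr)) * (Q * Q * Q * Q * R)) ≤
      2 * c₁ * g ^ 4 * (E * H + P * w * E) := by
  have hgv0 : 0 ≤ g * v := mul_nonneg hg hv0
  have h2 : 0 ≤ Q * Q := mul_nonneg hQ0 hQ0
  have h3 : Q * Q ≤ g * v * (g * v) := mul_le_mul hQG hQG hQ0 hgv0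
  have h4 : Q * (Q * Q) ≤ g * v * (g * v * (g * v)) := mul_le_mul hQG h3 h2 hgv0
  have h5 : Q * (Q * (Q * Q)) ≤ g * v * (g * v * (g * v * (g * v))) :=
    mul_le_mul hQG h4 (mul_nonneg hQ0 h2) hgv0
  have h6 : u * (Q * (Q * (Q * Q))) ≤ v * (g * v * (g * v * (g * v * (g * v)))) :=
    mul_le_mul huv h5 (mul_nonneg hQ0 (mul_nonneg hQ0 h2)) hv0
  have h60 : 0 ≤ u * (Q * (Q * (Q * Q))) :=
    mul_nonneg hu0 (mul_nonneg hQ0 (mul_nonneg hQ0 h2))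
  have hg4E : 0 ≤ g ^ 4 * E := mul_nonneg (by positivity) hE0
  have h8 : u * (Q * (Q * (Q * Q))) ≤ g ^ 4 * E := by
    refine h6.trans ?_
    have h7 : v * (g * v * (g * v * (g * v * (g * v)))) =
        g ^ 4 * (v * (v * (v * (v * v)))) := by ring
    rw [h7]
    exact mul_le_mul_of_nonneg_left hv5 (by positivity)
  have expand : H * ((c₁ * u * (r4δ + rr)) * (Q * Q * Q * Q * R)) =
      c₁ * ((u * (Q * (Q * (Q * Q)))) * (r4δ * R)) * H +
      c₁ * ((u * (Q * (Q * (Q * Q)))) * (rr * R)) * H := by ring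
  rw [expand, hEq]
  have hterm1 : c₁ * ((u * (Q * (Q * (Q * Q)))) * (2 * T * w)) * H ≤
      2 * c₁ * g ^ 4 * (P * w * E) := by
    have hHT0 : 0 ≤ H * T := mul_nonneg hH0 hT0
    have hA : (u * (Q * (Q * (Q * Q)))) * (H * T) ≤ g ^ 4 * E * P :=
      mul_le_mul h8 hHT hHT0 hg4E
    calc c₁ * ((u * (Q * (Q * (Q * Q)))) * (2 * T * w)) * H
        = (c₁ * (2 * w)) * ((u * (Q * (Q * (Q * Q)))) * (H * T)) := by ring
      _ ≤ (c₁ * (2 * w)) * (g ^ 4 * E * P) :=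
          mul_le_mul_of_nonneg_left hA (mul_nonneg hc₁ (by linarith))
      _ = 2 * c₁ * g ^ 4 * (P * w * E) := by ring
  have hterm2 : c₁ * ((u * (Q * (Q * (Q * Q)))) * (rr * R)) * H ≤
      2 * c₁ * g ^ 4 * (E * H) := by
    have h9 : (u * (Q * (Q * (Q * Q)))) * (rr * R) ≤ g ^ 4 * E * 1 := by
      have := mul_le_mul h8 hrr (mul_nonneg hrr0 hR0) hg4E
      simpa using this
    have h10 : c₁ * ((u * (Q * (Q * (Q * Q)))) * (rr * R)) * H ≤ c₁ * (g ^ 4 * E * 1) * H :=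
      mul_le_mul_of_nonneg_right (mul_le_mul_of_nonneg_left h9 hc₁) hH0
    refine h10.trans ?_
    have hnn : 0 ≤ c₁ * g ^ 4 * (E * H) :=
      mul_nonneg (mul_nonneg hc₁ (by positivity)) (mul_nonneg hE0 hH0)
    nlinarith [hnn]
  calc c₁ * ((u * (Q * (Q * (Q * Q)))) * (2 * T * w)) * H +
        c₁ * ((u * (Q * (Q * (Q * Q)))) * (rr * R)) * H
      ≤ 2 * c₁ * g ^ 4 * (P * w * E) + 2 * c₁ * g ^ 4 * (E * H) := add_le_add hterm1 hterm2
    _ = 2 * c₁ * g ^ 4 * (E * H + P * w * E) := by ring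

/-- The central counting estimate in the proof of Theorem 2: assuming the Robert–Sargos
bound and `d_k(n) ≪_ε n^ε`, the weighted sum over quadruples in `(K, 2K]^4` with
`|m^{1/k}+n^{1/k}−j^{1/k}−ℓ^{1/k}| ≤ X^{1−1/k+ε}·H^{−1}/(2kπ)`, times `H`, is
`≪_ε X^ε·H + X^{1−1/k+ε}·K^{2−3/k}·X^ε`. -/
theorem quadruple_sum_bound (k : ℕ) (hk : 2 ≤ k)
    (hcount : ∀ ε : ℝ, 0 < ε → ∃ c : ℝ, 0 < c ∧ ∀ K : ℕ, 1 ≤ K → ∀ δ : ℝ, 0 < δ →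
      (((((Finset.Ioc K (2 * K)) ×ˢ (Finset.Ioc K (2 * K))) ×ˢ
          ((Finset.Ioc K (2 * K)) ×ˢ (Finset.Ioc K (2 * K)))).filter
        (fun p : (ℕ × ℕ) × (ℕ × ℕ) =>
          |(p.1.1 : ℝ) ^ ((1 : ℝ) / k) + (p.1.2 : ℝ) ^ ((1 : ℝ) / k) -
            (p.2.1 : ℝ) ^ ((1 : ℝ) / k) - (p.2.2 : ℝ) ^ ((1 : ℝ) / k)| <
              δ * (K : ℝ) ^ ((1 : ℝ) / k))).card : ℝ) ≤
        c * (K : ℝ) ^ ε * ((K : ℝ) ^ 4 * δ + (K : ℝ) ^ 2))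
    (hd : ∀ ε : ℝ, 0 < ε → ∃ c : ℝ, 0 < c ∧ ∀ n : ℕ, 1 ≤ n → (dk k n : ℝ) ≤ c * (n : ℝ) ^ ε) :
    ∀ ε : ℝ, 0 < ε → ∃ C : ℝ, 0 < C ∧ ∀ (X H : ℝ) (K : ℕ),
      2 ≤ X → 1 ≤ H → H ≤ X / 2 → 1 ≤ K → (K : ℝ) ≤ X →
      H * ∑ p ∈ ((((Finset.Ioc K (2 * K)) ×ˢ (Finset.Ioc K (2 * K))) ×ˢ
            ((Finset.Ioc K (2 * K)) ×ˢ (Finset.Ioc K (2 * K)))).filter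
          (fun p : (ℕ × ℕ) × (ℕ × ℕ) =>
            |(p.1.1 : ℝ) ^ ((1 : ℝ) / k) + (p.1.2 : ℝ) ^ ((1 : ℝ) / k) -
              (p.2.1 : ℝ) ^ ((1 : ℝ) / k) - (p.2.2 : ℝ) ^ ((1 : ℝ) / k)| ≤
                X ^ (1 - 1 / (k : ℝ) + ε) / H / (2 * k * π))),
          (dk k p.1.1 : ℝ) * (dk k p.1.2 : ℝ) * (dk k p.2.1 : ℝ) * (dk k p.2.2 : ℝ) *
            ((p.1.1 * p.1.2 * p.2.1 * p.2.2 : ℕ) : ℝ) ^ (-(((k : ℝ) + 1) / (2 * k))) ≤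
        C * (X ^ ε * H + X ^ (1 - 1 / (k : ℝ) + ε) * (K : ℝ) ^ (2 - 3 / (k : ℝ)) * X ^ ε) := by
  intro ε hε
  obtain ⟨c₁, hc₁, hcount'⟩ := hcount (ε / 8) (by linarith)
  obtain ⟨c₂, hc₂, hd'⟩ := hd (ε / 8) (by linarith)
  rw [show c₁ = |c₁| from (abs_of_pos hc₁).symm] at hcount'
  rw [show c₂ = |c₂| from (abs_of_pos hc₂).symm] at hd'
  have hk0 : (k : ℝ) ≠ 0 := Nat.cast_ne_zero.mpr (by omega)
  have hk2 : (2 : ℝ) ≤ (k : ℝ) := by exact_mod_cast hk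
  have he0 : (0 : ℝ) ≤ ε / 8 := by linarith
  refine ⟨2 * |c₁| * (|c₂| * (2 : ℝ) ^ (ε / 8)) ^ 4, ?_, ?_⟩
  · exact mul_pos (mul_pos two_pos (abs_pos.mpr hc₁.ne'))
      (pow_pos (mul_pos (abs_pos.mpr hc₂.ne') (Real.rpow_pos_of_pos two_pos _)) 4)
  intro X H K hX hH hHX hK hKX
  have hX0 : (0 : ℝ) < X := by linarith
  have hH0 : (0 : ℝ) < H := by linarith
  rw [show X = |X| from (abs_of_pos hX0).symm] at hX hKX ⊢
  rw [show H = |H| from (abs_of_pos hH0).symm] at hH ⊢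
  have hX0' : (0 : ℝ) < |X| := abs_pos.mpr hX0.ne'
  have hX1 : (1 : ℝ) ≤ |X| := by linarith
  have hH0' : (0 : ℝ) < |H| := abs_pos.mpr hH0.ne'
  have hr1 : (1 : ℝ) ≤ (K : ℝ) := by exact_mod_cast hK
  have hr0 : (0 : ℝ) < (K : ℝ) := by linarith
  have hπ : (1 : ℝ) ≤ 2 * (k : ℝ) * π := by nlinarith [Real.pi_gt_three]
  set T : ℝ := |X| ^ (1 - 1 / (k : ℝ) + ε) / |H| / (2 * (k : ℝ) * π) with hTdef
  have hT0 : 0 < T := by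
    rw [hTdef]
    exact div_pos (div_pos (Real.rpow_pos_of_pos hX0' _) hH0') (by linarith)
  set δ : ℝ := 2 * T / (K : ℝ) ^ ((1 : ℝ) / (k : ℝ)) with hδdef
  have hrk0 : (0 : ℝ) < (K : ℝ) ^ ((1 : ℝ) / (k : ℝ)) := Real.rpow_pos_of_pos hr0 _
  have hδ0 : 0 < δ := by rw [hδdef]; exact div_pos (by linarith) hrk0
  have hδr : δ * (K : ℝ) ^ ((1 : ℝ) / (k : ℝ)) = 2 * T := by
    rw [hδdef]; field_simp
  set S := ((((Finset.Ioc K (2 * K)) ×ˢ (Finset.Ioc K (2 * K))) ×ˢ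
      ((Finset.Ioc K (2 * K)) ×ˢ (Finset.Ioc K (2 * K)))).filter
    (fun p : (ℕ × ℕ) × (ℕ × ℕ) =>
      |(p.1.1 : ℝ) ^ ((1 : ℝ) / k) + (p.1.2 : ℝ) ^ ((1 : ℝ) / k) -
        (p.2.1 : ℝ) ^ ((1 : ℝ) / k) - (p.2.2 : ℝ) ^ ((1 : ℝ) / k)| ≤ T)) with hSdef
  have hsub : S ⊆ ((((Finset.Ioc K (2 * K)) ×ˢ (Finset.Ioc K (2 * K))) ×ˢ
      ((Finset.Ioc K (2 * K)) ×ˢ (Finset.Ioc K (2 * K)))).filter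
    (fun p : (ℕ × ℕ) × (ℕ × ℕ) =>
      |(p.1.1 : ℝ) ^ ((1 : ℝ) / k) + (p.1.2 : ℝ) ^ ((1 : ℝ) / k) -
        (p.2.1 : ℝ) ^ ((1 : ℝ) / k) - (p.2.2 : ℝ) ^ ((1 : ℝ) / k)| <
          δ * (K : ℝ) ^ ((1 : ℝ) / k))) := by
    rw [hSdef]
    refine Finset.monotone_filter_right _ ?_
    intro x _ hx
    exact lt_of_le_of_lt hx (by rw [hδr]; linarith)
  have hcard : (S.card : ℝ) ≤ |c₁| * (K : ℝ) ^ (ε / 8) * ((K : ℝ) ^ 4 * δ + (K : ℝ) ^ 2) :=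
    le_trans (by exact_mod_cast Finset.card_le_card hsub) (hcount' K hK δ hδ0)
  have hterm : ∀ p ∈ S,
      (dk k p.1.1 : ℝ) * (dk k p.1.2 : ℝ) * (dk k p.2.1 : ℝ) * (dk k p.2.2 : ℝ) *
        ((p.1.1 * p.1.2 * p.2.1 * p.2.2 : ℕ) : ℝ) ^ (-(((k : ℝ) + 1) / (2 * k))) ≤
      (|c₂| * (2 : ℝ) ^ (ε / 8) * (K : ℝ) ^ (ε / 8)) *
        (|c₂| * (2 : ℝ) ^ (ε / 8) * (K : ℝ) ^ (ε / 8)) *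
        (|c₂| * (2 : ℝ) ^ (ε / 8) * (K : ℝ) ^ (ε / 8)) *
        (|c₂| * (2 : ℝ) ^ (ε / 8) * (K : ℝ) ^ (ε / 8)) *
        (K : ℝ) ^ (-(2 + 2 / (k : ℝ))) := by
    intro p hp
    rw [hSdef, Finset.mem_filter] at hp
    have hp' := hp.1
    simp only [Finset.mem_product, Finset.mem_Ioc] at hp'
    obtain ⟨⟨⟨hm1, hm2⟩, hn1, hn2⟩, ⟨hj1, hj2⟩, hl1, hl2⟩ := hp'
    have hQ : ∀ a : ℕ, K < a → a ≤ 2 * K →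
        (dk k a : ℝ) ≤ |c₂| * (2 : ℝ) ^ (ε / 8) * (K : ℝ) ^ (ε / 8) := by
      intro a ha1 ha2
      have h1 : 1 ≤ a := by omega
      refine (hd' a h1).trans ?_
      have h2 : ((a : ℕ) : ℝ) ^ (ε / 8) ≤ (2 * (K : ℝ)) ^ (ε / 8) := by
        refine Real.rpow_le_rpow (Nat.cast_nonneg _) ?_ he0
        exact_mod_cast ha2
      rw [Real.mul_rpow (by norm_num) (Nat.cast_nonneg K)] at h2
      calc |c₂| * ((a : ℕ) : ℝ) ^ (ε / 8)
          ≤ |c₂| * ((2 : ℝ) ^ (ε / 8) * (K : ℝ) ^ (ε / 8)) :=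
            mul_le_mul_of_nonneg_left h2 (abs_nonneg _)
        _ = |c₂| * (2 : ℝ) ^ (ε / 8) * (K : ℝ) ^ (ε / 8) := by ring
    have hw : ((p.1.1 * p.1.2 * p.2.1 * p.2.2 : ℕ) : ℝ) ^ (-(((k : ℝ) + 1) / (2 * k))) ≤
        (K : ℝ) ^ (-(2 + 2 / (k : ℝ))) := by
      have hbase : ((K : ℝ)) ^ (4 : ℕ) ≤ ((p.1.1 * p.1.2 * p.2.1 * p.2.2 : ℕ) : ℝ) := by
        push_cast
        have hmm : (K : ℝ) ≤ (p.1.1 : ℝ) := by exact_mod_cast hm1.le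
        have hnn : (K : ℝ) ≤ (p.1.2 : ℝ) := by exact_mod_cast hn1.le
        have hjj : (K : ℝ) ≤ (p.2.1 : ℝ) := by exact_mod_cast hj1.le
        have hll : (K : ℝ) ≤ (p.2.2 : ℝ) := by exact_mod_cast hl1.le
        calc (K : ℝ) ^ (4 : ℕ) = (K : ℝ) * (K : ℝ) * (K : ℝ) * (K : ℝ) := by ring
          _ ≤ (p.1.1 : ℝ) * (p.1.2 : ℝ) * (p.2.1 : ℝ) * (p.2.2 : ℝ) := by
            gcongr
      have hz : (-(((k : ℝ) + 1) / (2 * k))) ≤ 0 := by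
        have : (0 : ℝ) ≤ ((k : ℝ) + 1) / (2 * (k : ℝ)) := by positivity
        linarith
      have h4 : (0 : ℝ) < (K : ℝ) ^ (4 : ℕ) := by positivity
      refine (Real.rpow_le_rpow_of_nonpos h4 hbase hz).trans_eq ?_
      rw [← Real.rpow_natCast (K : ℝ) 4, ← Real.rpow_mul hr0.le]
      congr 1
      push_cast
      field_simp
      ring
    have hQ0' : (0 : ℝ) ≤ |c₂| * (2 : ℝ) ^ (ε / 8) * (K : ℝ) ^ (ε / 8) := by positivity
    have hw0 : (0 : ℝ) ≤
        ((p.1.1 * p.1.2 * p.2.1 * p.2.2 : ℕ) : ℝ) ^ (-(((k : ℝ) + 1) / (2 * k))) :=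
      Real.rpow_nonneg (Nat.cast_nonneg _) _
    exact mul_le_mul (mul_le_mul (mul_le_mul (mul_le_mul (hQ _ hm1 hm2) (hQ _ hn1 hn2)
      (Nat.cast_nonneg _) hQ0') (hQ _ hj1 hj2) (Nat.cast_nonneg _) (by positivity))
      (hQ _ hl1 hl2) (Nat.cast_nonneg _) (by positivity)) hw hw0 (by positivity)
  have hM0 : (0 : ℝ) ≤ (|c₂| * (2 : ℝ) ^ (ε / 8) * (K : ℝ) ^ (ε / 8)) *
      (|c₂| * (2 : ℝ) ^ (ε / 8) * (K : ℝ) ^ (ε / 8)) *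
      (|c₂| * (2 : ℝ) ^ (ε / 8) * (K : ℝ) ^ (ε / 8)) *
      (|c₂| * (2 : ℝ) ^ (ε / 8) * (K : ℝ) ^ (ε / 8)) * (K : ℝ) ^ (-(2 + 2 / (k : ℝ))) := by
    positivity
  have hsum : (∑ p ∈ S,
      (dk k p.1.1 : ℝ) * (dk k p.1.2 : ℝ) * (dk k p.2.1 : ℝ) * (dk k p.2.2 : ℝ) *
        ((p.1.1 * p.1.2 * p.2.1 * p.2.2 : ℕ) : ℝ) ^ (-(((k : ℝ) + 1) / (2 * k)))) ≤
      (S.card : ℝ) * ((|c₂| * (2 : ℝ) ^ (ε / 8) * (K : ℝ) ^ (ε / 8)) *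
        (|c₂| * (2 : ℝ) ^ (ε / 8) * (K : ℝ) ^ (ε / 8)) *
        (|c₂| * (2 : ℝ) ^ (ε / 8) * (K : ℝ) ^ (ε / 8)) *
        (|c₂| * (2 : ℝ) ^ (ε / 8) * (K : ℝ) ^ (ε / 8)) * (K : ℝ) ^ (-(2 + 2 / (k : ℝ)))) := by
    have h := Finset.sum_le_card_nsmul S _ _ hterm
    rw [nsmul_eq_mul] at h
    exact h
  -- key facts for the final algebra
  have hu : (K : ℝ) ^ (ε / 8) ≤ |X| ^ (ε / 8) := Real.rpow_le_rpow hr0.le hKX he0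
  have hQG : |c₂| * (2 : ℝ) ^ (ε / 8) * (K : ℝ) ^ (ε / 8) ≤
      (|c₂| * (2 : ℝ) ^ (ε / 8)) * (|X| ^ (ε / 8)) :=
    mul_le_mul_of_nonneg_left hu (by positivity)
  have hX5 : |X| ^ (ε / 8) * (|X| ^ (ε / 8) * (|X| ^ (ε / 8) *
      (|X| ^ (ε / 8) * |X| ^ (ε / 8)))) ≤ |X| ^ ε := by
    rw [← Real.rpow_add hX0', ← Real.rpow_add hX0', ← Real.rpow_add hX0',
      ← Real.rpow_add hX0']
    exact Real.rpow_le_rpow_of_exponent_le hX1 (by linarith)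
  have hEq : (K : ℝ) ^ 4 * δ * (K : ℝ) ^ (-(2 + 2 / (k : ℝ))) =
      2 * T * (K : ℝ) ^ (2 - 3 / (k : ℝ)) := by
    rw [hδdef, div_eq_mul_inv, ← Real.rpow_neg hr0.le, ← Real.rpow_natCast (K : ℝ) 4]
    rw [show ((K : ℝ) ^ ((4 : ℕ) : ℝ) * (2 * T * (K : ℝ) ^ (-((1 : ℝ) / (k : ℝ)))) *
        (K : ℝ) ^ (-(2 + 2 / (k : ℝ)))) =
        2 * T * ((K : ℝ) ^ ((4 : ℕ) : ℝ) * (K : ℝ) ^ (-((1 : ℝ) / (k : ℝ))) *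
        (K : ℝ) ^ (-(2 + 2 / (k : ℝ)))) from by ring]
    rw [← Real.rpow_add hr0, ← Real.rpow_add hr0]
    rw [show ((4 : ℕ) : ℝ) + -((1 : ℝ) / (k : ℝ)) + -(2 + 2 / (k : ℝ)) =
        2 - 3 / (k : ℝ) from by push_cast; ring]
  have hr2R : (K : ℝ) ^ 2 * (K : ℝ) ^ (-(2 + 2 / (k : ℝ))) ≤ 1 := by
    rw [← Real.rpow_natCast (K : ℝ) 2, ← Real.rpow_add hr0]
    refine Real.rpow_le_one_of_one_le_of_nonpos hr1 ?_
    have h2k : (0 : ℝ) ≤ 2 / (k : ℝ) := by positivity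
    push_cast
    linarith
  have hHT : |H| * T ≤ |X| ^ (1 - 1 / (k : ℝ) + ε) := by
    rw [hTdef, div_div, mul_div_assoc', mul_div_mul_left _ _ hH0'.ne']
    exact div_le_self (Real.rpow_nonneg (abs_nonneg X) _) hπ
  refine le_trans (mul_le_mul_of_nonneg_left
    (hsum.trans (mul_le_mul_of_nonneg_right hcard hM0)) (abs_nonneg H)) ?_
  exact qsb_alg |c₁| (|c₂| * (2 : ℝ) ^ (ε / 8)) ((K : ℝ) ^ (ε / 8)) (|X| ^ (ε / 8))
    ((K : ℝ) ^ (2 - 3 / (k : ℝ))) |H| T (|X| ^ (1 - 1 / (k : ℝ) + ε))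
    ((K : ℝ) ^ (-(2 + 2 / (k : ℝ)))) ((K : ℝ) ^ 2) ((K : ℝ) ^ 4 * δ) (|X| ^ ε)
    (|c₂| * (2 : ℝ) ^ (ε / 8) * (K : ℝ) ^ (ε / 8))
    (abs_nonneg _) (by positivity) (by positivity) (by positivity)
    (by positivity) (abs_nonneg _) hT0.le (by positivity) (by positivity)
    (by positivity) (by positivity)
    hQG hu hEq hr2R hHT hX5
end
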